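/- Let A be an m×n binary matrix. For every integer k ≥ 1, the graph G^k(A,A) is word-representable if and only if the graph G(A) is word-representable. -/

import Mathlib

/-- A word `w` over alphabet `V` represents the graph `G`: every vertex occurs in `w`,
and two distinct vertices are adjacent iff their letters alternate in `w`. -/
def WordRepresents {V : Type*} [DecidableEq V] (w : List V) (G : SimpleGraph V) : Prop :=
  (∀ v : V, v ∈ w) ∧
  ∀ x y : V, x ≠ y →
    (G.Adj x y ↔ (w.filter (fun z => z == x || z == y)).Chain' (· ≠ ·))

/-- A graph is word-representable if some word represents it. -/
def WordRepresentable {V : Type*} [DecidableEq V] (G : SimpleGraph V) : Prop :=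
  ∃ w : List V, WordRepresents w G

/-- The split graph `G(M)` of an `m × n` binary matrix `M`: vertices `Sum.inl j`
(`j : Fin n`) form a clique, vertices `Sum.inr i` (`i : Fin m`) form an independent set,
and `Sum.inr i` is adjacent to `Sum.inl j` iff `M i j = true`. -/
def splitGraph {m n : ℕ} (M : Fin m → Fin n → Bool) : SimpleGraph (Fin n ⊕ Fin m) :=
  SimpleGraph.fromRel (fun x y =>
    match x, y with
    | Sum.inl _, Sum.inl _ => True
    | Sum.inl j, Sum.inr i => M i j = true
    | _, _ => False)

/-- `morphIter A B k` is the matrix `M^k(A,B)`, obtained from the `1 × 1` matrix `[0]`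
by `k` iterations of the 2-dimensional morphism replacing `0` by the block `A`
and `1` by the block `B`. -/
def morphIter {m n : ℕ} (A B : Fin m → Fin n → Bool) :
    (k : ℕ) → Fin (m ^ k) → Fin (n ^ k) → Bool
  | 0, _, _ => false
  | k + 1, i, j =>
    have hm : 0 < m := Nat.pos_of_ne_zero (fun h => by
      have := i.isLt; simp [h] at this)
    have hn : 0 < n := Nat.pos_of_ne_zero (fun h => by
      have := j.isLt; simp [h] at this)
    have hR : i.val / m < m ^ k :=
      (Nat.div_lt_iff_lt_mul hm).2 (by rw [← pow_succ]; exact i.isLt)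
    have hC : j.val / n < n ^ k :=
      (Nat.div_lt_iff_lt_mul hn).2 (by rw [← pow_succ]; exact j.isLt)
    if morphIter A B k ⟨i.val / m, hR⟩ ⟨j.val / n, hC⟩ then
      B ⟨i.val % m, Nat.mod_lt _ hm⟩ ⟨j.val % n, Nat.mod_lt _ hn⟩
    else
      A ⟨i.val % m, Nat.mod_lt _ hm⟩ ⟨j.val % n, Nat.mod_lt _ hn⟩

/-- `Gk A B k` is the split graph `G^k(A,B) = G(M^k(A,B))`. -/
def Gk {m n : ℕ} (A B : Fin m → Fin n → Bool) (k : ℕ) :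
    SimpleGraph (Fin (n ^ k) ⊕ Fin (m ^ k)) :=
  splitGraph (morphIter A B k)

namespace WR5
open List

section general
variable {α : Type*} [DecidableEq α]

lemma getLast?_cons_ne {a : α} {l : List α} (h : l ≠ []) :
    (a :: l).getLast? = l.getLast? := by
  cases l with
  | nil => exact absurd rfl h
  | cons b s => rw [getLast?_cons_cons]

lemma getLast?_dedup (l : List α) : l.dedup.getLast? = l.getLast? := by
  induction l with
  | nil => rfl
  | cons a t ih =>
    by_cases h : a ∈ t
    · rw [dedup_cons_of_mem h, ih, getLast?_cons_ne (ne_nil_of_mem h)]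
    · rw [dedup_cons_of_notMem h]
      cases ht : t with
      | nil => rfl
      | cons c u =>
        rw [getLast?_cons_ne (by simp [List.dedup_eq_nil] : (c :: u).dedup ≠ []),
          getLast?_cons_ne (by simp : (c : α) :: u ≠ []), ← ht, ih, ht]

lemma filter_dedup (p : α → Bool) (l : List α) :
    l.dedup.filter p = (l.filter p).dedup := by
  induction l with
  | nil => rfl
  | cons a t ih =>
    by_cases h : a ∈ t
    · rw [dedup_cons_of_mem h, filter_cons]
      by_cases hp : p a
      · simp only [hp, if_pos, ih]
        rw [dedup_cons_of_mem (mem_filter.2 ⟨h, hp⟩)]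
      · simp only [hp]; simpa using ih
    · rw [dedup_cons_of_notMem h, filter_cons, filter_cons]
      by_cases hp : p a
      · simp only [hp, if_pos, ih]
        rw [dedup_cons_of_notMem (fun hc => h (mem_filter.1 hc).1)]
      · simp only [hp]; simpa using ih

lemma eq_pair_of {u : List α} {x y : α} (hnd : u.Nodup) (hx : x ∈ u) (hy : y ∈ u)
    (hsub : ∀ z ∈ u, z = x ∨ z = y) (hxy : x ≠ y) : u = [x, y] ∨ u = [y, x] := by
  match u with
  | [] => cases hx
  | [a] =>
    simp only [mem_singleton] at hx hy
    exact absurd (hx.trans hy.symm) hxy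
  | a :: b :: rest =>
    have hab : a ≠ b := by
      intro hab; subst hab; simp [Nodup] at hnd
    have ha := hsub a (by simp)
    have hb := hsub b (by simp)
    have hrest : rest = [] := by
      cases rest with
      | nil => rfl
      | cons c v =>
        have hc := hsub c (by simp)
        have hna : c ≠ a := by rintro rfl; simp at hnd
        have hnb : c ≠ b := by rintro rfl; simp at hnd
        have : c = a ∨ c = b := by
          rcases hc with rfl | rfl <;> rcases ha with rfl | h1 <;>
            rcases hb with h2 | rfl <;> tauto
        tauto
    subst hrest
    rcases ha with rfl | rfl <;> rcases hb with rfl | rfl <;> first | tauto | simp_all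

omit [DecidableEq α] in
lemma chain'_mem_iff {R S : α → α → Prop} :
    ∀ {l : List α}, (∀ a ∈ l, ∀ b ∈ l, (R a b ↔ S a b)) → (l.Chain' R ↔ l.Chain' S)
  | [], _ => by simp [Chain', isChain_nil]
  | [a], _ => by simp [Chain', isChain_singleton]
  | a :: b :: t, h => by
    show List.IsChain R _ ↔ List.IsChain S _
    rw [isChain_cons_cons, isChain_cons_cons,
      h a (by simp) b (by simp)]
    exact and_congr_right' (chain'_mem_iff (fun p hp q hq => h p (mem_cons_of_mem _ hp) q (mem_cons_of_mem _ hq)))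

omit [DecidableEq α] in
lemma chain'_ne_map_iff {β : Type*} (f : α → β) {x y : α} (hf : f x ≠ f y)
    {l : List α} (hl : ∀ z ∈ l, z = x ∨ z = y) :
    (l.map f).Chain' (· ≠ ·) ↔ l.Chain' (· ≠ ·) := by
  show List.IsChain _ _ ↔ List.IsChain _ _
  rw [isChain_map]
  refine chain'_mem_iff (fun a ha b hb => ?_)
  rcases hl a ha with rfl | rfl <;> rcases hl b hb with rfl | rfl
  · simp
  · exact ⟨fun _ h => hf (congrArg f h), fun _ => hf⟩
  · exact ⟨fun _ h => hf (congrArg f h.symm), fun _ => hf.symm⟩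
  · simp

lemma doubling {w : List α} {G : SimpleGraph α} (h : WordRepresents w G) :
    WordRepresents (w ++ w.dedup) G := by
  obtain ⟨hmem, halt⟩ := h
  refine ⟨fun v => mem_append.2 (Or.inl (hmem v)), fun x y hxy => ?_⟩
  rw [halt x y hxy, filter_append, filter_dedup]
  set p : α → Bool := fun z => z == x || z == y with hp
  set v := w.filter p with hv
  have hxv : x ∈ v := mem_filter.2 ⟨hmem x, by simp [hp]⟩
  have hyv : y ∈ v := mem_filter.2 ⟨hmem y, by simp [hp]⟩
  obtain hdd | hdd := eq_pair_of (nodup_dedup v) (mem_dedup.2 hxv) (mem_dedup.2 hyv)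
    (fun z hz => by
      have := (mem_filter.1 (mem_dedup.1 hz)).2; simpa [hp] using this) hxy <;>
  · have hlast : v.getLast? = v.dedup.getLast? := (getLast?_dedup v).symm
    rw [hdd] at hlast
    unfold Chain'
    rw [isChain_append, hdd]
    simp only [hlast]
    simp [hxy, hxy.symm]

omit [DecidableEq α] in
lemma filter_eq_singleton {l : List α} {q : α → Bool} {u : α} (hnd : l.Nodup)
    (hu : u ∈ l) (hq : ∀ z ∈ l, (q z = true ↔ z = u)) : l.filter q = [u] := by
  induction l with
  | nil => cases hu
  | cons a t ih =>
    rw [filter_cons]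
    rcases mem_cons.1 hu with rfl | hut
    · rw [if_pos ((hq _ (mem_cons_self)).2 rfl)]
      have ht : t.filter q = [] := filter_eq_nil_iff.2 (fun z hz hqz => by
        have hz' := (hq z (mem_cons_of_mem _ hz)).1 hqz
        subst hz'
        exact (nodup_cons.1 hnd).1 hz)
      rw [ht]
    · have ha : q a = false := by
        rw [← Bool.not_eq_true]
        intro hqa
        have := (hq a (mem_cons_self)).1 hqa
        subst this
        exact (nodup_cons.1 hnd).1 hut
      rw [ha]
      simp only [Bool.false_eq_true, if_false]
      exact ih (nodup_cons.1 hnd).2 hut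
        (fun z hz => hq z (mem_cons_of_mem _ hz))

/-- custom count, to avoid `BEq` instance mismatches -/
def cnt (c : α) (s : List α) : ℕ := (s.filter (fun z => decide (z = c))).length

lemma cnt_cons_self (c : α) (t : List α) : cnt c (c :: t) = cnt c t + 1 := by
  simp [cnt, filter_cons]

lemma cnt_cons_ne {a c : α} (h : a ≠ c) (t : List α) : cnt c (a :: t) = cnt c t := by
  simp [cnt, filter_cons, h]

lemma cnt_pos {c : α} {s : List α} (h : c ∈ s) : 1 ≤ cnt c s := by
  have : c ∈ s.filter (fun z => decide (z = c)) := mem_filter.2 ⟨h, by simp⟩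
  have := length_pos_iff.2 (ne_nil_of_mem this)
  exact this

lemma cnt_eq_zero {c : α} {s : List α} (h : c ∉ s) : cnt c s = 0 := by
  simp only [cnt, length_eq_zero_iff, filter_eq_nil_iff]
  intro a ha
  simp only [decide_eq_true_eq]
  rintro rfl; exact h ha

lemma cnt_append (c : α) (s t : List α) : cnt c (s ++ t) = cnt c s + cnt c t := by
  simp [cnt, filter_append]

omit [DecidableEq α] in
lemma chain'_flatten_rep {u v : α} (h : u ≠ v) :
    ∀ t : ℕ, ((replicate t [u, v]).flatten).Chain' (· ≠ ·) ∧
      ∀ z ∈ ((replicate t [u, v]).flatten).head?, z = u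
  | 0 => by simp [Chain']
  | t + 1 => by
    obtain ⟨h1, h2⟩ := chain'_flatten_rep h t
    rw [replicate_succ, flatten_cons]
    simp only [cons_append, nil_append]
    refine ⟨isChain_cons.2 ⟨?_, isChain_cons.2 ⟨?_, h1⟩⟩, ?_⟩
    · intro z hz
      simp only [head?_cons, Option.mem_def, Option.some.injEq] at hz
      subst hz
      exact h
    · intro z hz
      have hzu := h2 z hz
      subst hzu
      exact h.symm
    · intro z hz
      simp only [head?_cons, Option.mem_def, Option.some.injEq] at hz
      subst hz
      rfl

omit [DecidableEq α] in
lemma not_chain_pattern {u v : α} (h : u ≠ v) (s : ℕ) :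
    ¬ ((replicate (s + 1) [u, v]).flatten ++ [v, u]).Chain' (· ≠ ·) := by
  intro hch
  have hinf : [v, v] <:+: ((replicate (s + 1) [u, v]).flatten ++ [v, u]) := by
    refine ⟨(replicate s [u, v]).flatten ++ [u], [u], ?_⟩
    rw [replicate_succ', flatten_append]
    simp
  have hc2 : ([v, v] : List α).Chain' (· ≠ ·) := hch.infix hinf
  exact (isChain_cons_cons.1 hc2).1 rfl


/-- boolean membership via `decide`, to avoid instance trouble -/
def memb (a : α) (t : List α) : Bool := t.any (fun z => decide (z = a))

lemma memb_iff {a : α} {t : List α} : memb a t = true ↔ a ∈ t := by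
  simp [memb, List.any_eq_true]

end general

section main
open Sum
variable {m n K : ℕ}

/-- class (base row/column) of a vertex of the blown-up split graph -/
def cls : Fin (n ^ (K + 1)) ⊕ Fin (m ^ (K + 1)) → Fin n ⊕ Fin m
  | Sum.inl j => Sum.inl ⟨j.val % n, Nat.mod_lt _ (Nat.pos_of_ne_zero fun h => by
      have := j.isLt; simp [h] at this)⟩
  | Sum.inr i => Sum.inr ⟨i.val % m, Nat.mod_lt _ (Nat.pos_of_ne_zero fun h => by
      have := i.isLt; simp [h] at this)⟩

/-- canonical embedding of the base split graph into the blown-up one -/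
def iota : Fin n ⊕ Fin m → Fin (n ^ (K + 1)) ⊕ Fin (m ^ (K + 1)) :=
  Sum.map (Fin.castLE (Nat.le_self_pow (Nat.succ_ne_zero K) n))
    (Fin.castLE (Nat.le_self_pow (Nat.succ_ne_zero K) m))

lemma iota_injective : Function.Injective (iota (m := m) (n := n) (K := K)) :=
  Function.Injective.sumMap (Fin.castLE_injective _) (Fin.castLE_injective _)

lemma cls_iota (x : Fin n ⊕ Fin m) : cls (iota (K := K) x) = x := by
  cases x with
  | inl j => simp [cls, iota, Fin.ext_iff, Nat.mod_eq_of_lt j.isLt]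
  | inr i => simp [cls, iota, Fin.ext_iff, Nat.mod_eq_of_lt i.isLt]

def allV' : List (Fin (n ^ (K + 1)) ⊕ Fin (m ^ (K + 1))) :=
  (List.finRange (n ^ (K + 1))).map Sum.inl ++ (List.finRange (m ^ (K + 1))).map Sum.inr

lemma mem_allV' (v' : Fin (n ^ (K + 1)) ⊕ Fin (m ^ (K + 1))) :
    v' ∈ allV' (m := m) (n := n) (K := K) := by
  cases v' <;> simp [allV', List.mem_finRange]

lemma nodup_allV' : (allV' (m := m) (n := n) (K := K)).Nodup := by
  refine List.Nodup.append ?_ ?_ ?_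
  · exact (List.nodup_finRange _).map Sum.inl_injective
  · exact (List.nodup_finRange _).map Sum.inr_injective
  · intro a ha hb
    simp only [List.mem_map] at ha hb
    obtain ⟨x, -, rfl⟩ := ha
    obtain ⟨y, -, h⟩ := hb
    cases h

/-- the block of all copies of a base vertex -/
def blk (c : Fin n ⊕ Fin m) : List (Fin (n ^ (K + 1)) ⊕ Fin (m ^ (K + 1))) :=
  allV'.filter (fun v' => decide (cls v' = c))

lemma mem_blk {v' : Fin (n ^ (K + 1)) ⊕ Fin (m ^ (K + 1))} {c : Fin n ⊕ Fin m} :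
    v' ∈ blk c ↔ cls v' = c := by
  simp [blk, List.mem_filter, mem_allV']

lemma nodup_blk (c : Fin n ⊕ Fin m) : (blk (m := m) (n := n) (K := K) c).Nodup :=
  nodup_allV'.filter _

def isInd : Fin n ⊕ Fin m → Bool
  | Sum.inl _ => false
  | Sum.inr _ => true

/-- the blow-up of a word: every occurrence of a letter is replaced by the full block
of its copies; for independent letters the last occurrence gets the reversed block. -/
def expand : List (Fin n ⊕ Fin m) → List (Fin (n ^ (K + 1)) ⊕ Fin (m ^ (K + 1)))
  | [] => []
  | a :: t => (if isInd a && !(WR5.memb a t) then (blk a).reverse else blk a) ++ expand t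

lemma expand_cons (a : Fin n ⊕ Fin m) (t : List (Fin n ⊕ Fin m)) :
    expand (K := K) (a :: t) =
      (if isInd a && !(WR5.memb a t) then (blk a).reverse else blk a) ++ expand t := rfl

lemma mem_expand {s : List (Fin n ⊕ Fin m)} {a : Fin n ⊕ Fin m} (ha : a ∈ s)
    {v' : Fin (n ^ (K + 1)) ⊕ Fin (m ^ (K + 1))} (hv : cls v' = a) : v' ∈ expand s := by
  induction s with
  | nil => cases ha
  | cons b t ih =>
    rw [expand_cons]
    rcases List.mem_cons.1 ha with rfl | h
    · refine List.mem_append_left _ ?_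
      split
      · exact List.mem_reverse.2 (mem_blk.2 hv)
      · exact mem_blk.2 hv
    · exact List.mem_append_right _ (ih h)

section pairs
variable {x' y' : Fin (n ^ (K + 1)) ⊕ Fin (m ^ (K + 1))} {q : Fin (n ^ (K + 1)) ⊕ Fin (m ^ (K + 1)) → Bool}

lemma blk_filter_of_ne {a : Fin n ⊕ Fin m}
    (hq : ∀ z, q z = true ↔ (z = x' ∨ z = y'))
    (hx : a ≠ cls x') (hy : a ≠ cls y') : (blk a).filter q = [] :=
  List.filter_eq_nil_iff.2 (fun z hz hqz => by
    rcases (hq z).1 hqz with rfl | rfl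
    · exact hx (mem_blk.1 hz).symm
    · exact hy (mem_blk.1 hz).symm)

lemma blk_filter_self (hq : ∀ z, q z = true ↔ (z = x' ∨ z = y'))
    (hcls : cls x' ≠ cls y') : (blk (cls x')).filter q = [x'] := by
  refine WR5.filter_eq_singleton (nodup_blk _) (mem_blk.2 rfl) (fun z hz => ?_)
  constructor
  · intro hqz
    rcases (hq z).1 hqz with rfl | rfl
    · rfl
    · exact absurd (mem_blk.1 hz) (Ne.symm hcls)
  · rintro rfl
    exact (hq z).2 (Or.inl rfl)

lemma blk_filter_pair (hq : ∀ z, q z = true ↔ (z = x' ∨ z = y'))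
    (hxy : x' ≠ y') {c : Fin n ⊕ Fin m} (hx : cls x' = c) (hy : cls y' = c) :
    (blk c).filter q = [x', y'] ∨ (blk c).filter q = [y', x'] :=
  WR5.eq_pair_of ((nodup_blk c).filter q)
    (List.mem_filter.2 ⟨mem_blk.2 hx, (hq _).2 (Or.inl rfl)⟩)
    (List.mem_filter.2 ⟨mem_blk.2 hy, (hq _).2 (Or.inr rfl)⟩)
    (fun z hz => (hq z).1 (List.mem_filter.1 hz).2) hxy

lemma block_part_filter_of_ne (hq : ∀ z, q z = true ↔ (z = x' ∨ z = y'))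
    {a : Fin n ⊕ Fin m} (hx : a ≠ cls x') (hy : a ≠ cls y')
    (cond : Prop) [Decidable cond] :
    ((if cond then (blk a).reverse else blk a)).filter q = [] := by
  split
  · rw [List.filter_reverse, blk_filter_of_ne hq hx hy]
    rfl
  · exact blk_filter_of_ne hq hx hy

lemma expand_filter_ne (hq : ∀ z, q z = true ↔ (z = x' ∨ z = y'))
    {p : Fin n ⊕ Fin m → Bool}
    (hp : ∀ z, p z = true ↔ (z = cls x' ∨ z = cls y'))
    (hcls : cls x' ≠ cls y') (s : List (Fin n ⊕ Fin m)) :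
    (expand (K := K) s).filter q =
      (s.filter p).map (fun z => if z = cls x' then x' else y') := by
  induction s with
  | nil => rfl
  | cons a t ih =>
    rw [expand_cons, List.filter_append, ih, List.filter_cons]
    have hblk : ((if isInd a && !(WR5.memb a t) then (blk a).reverse else blk a)).filter q
        = (blk a).filter q := by
      split
      · rw [List.filter_reverse]
        by_cases h1 : a = cls x'
        · subst h1; rw [blk_filter_self hq hcls]; rfl
        · by_cases h2 : a = cls y'
          · subst h2
            rw [blk_filter_self (q := q) (x' := y') (y' := x')
              (fun z => (hq z).trans or_comm) hcls.symm]
            rfl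
          · rw [blk_filter_of_ne hq h1 h2]; rfl
      · rfl
    rw [hblk]
    by_cases h1 : a = cls x'
    · subst h1
      rw [blk_filter_self hq hcls, if_pos ((hp _).2 (Or.inl rfl))]
      simp
    · by_cases h2 : a = cls y'
      · subst h2
        rw [blk_filter_self (q := q) (x' := y') (y' := x')
          (fun z => (hq z).trans or_comm) hcls.symm,
          if_pos ((hp _).2 (Or.inr rfl))]
        simp [Ne.symm hcls]
      · rw [blk_filter_of_ne hq h1 h2]
        have : p a = false := by
          rw [← Bool.not_eq_true]
          intro hpa
          rcases (hp a).1 hpa with rfl | rfl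
          · exact h1 rfl
          · exact h2 rfl
        rw [this]
        simp

lemma expand_filter_zero (hq : ∀ z, q z = true ↔ (z = x' ∨ z = y'))
    {c : Fin n ⊕ Fin m} (hx : cls x' = c) (hy : cls y' = c)
    {s : List (Fin n ⊕ Fin m)} (hc : c ∉ s) :
    (expand (K := K) s).filter q = [] := by
  induction s with
  | nil => rfl
  | cons a t ih =>
    rw [expand_cons, List.filter_append]
    have hac : a ≠ c := fun h => hc (h ▸ List.mem_cons_self)
    rw [block_part_filter_of_ne hq (hx ▸ hac) (hy ▸ hac) _,
      ih (fun h => hc (List.mem_cons_of_mem _ h))]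
    rfl

lemma expand_filter_clique (hq : ∀ z, q z = true ↔ (z = x' ∨ z = y'))
    {c : Fin n ⊕ Fin m} (hx : cls x' = c) (hy : cls y' = c) (hind : isInd c = false)
    (s : List (Fin n ⊕ Fin m)) :
    (expand (K := K) s).filter q =
      (List.replicate (WR5.cnt c s) ((blk c).filter q)).flatten := by
  induction s with
  | nil => rfl
  | cons a t ih =>
    rw [expand_cons, List.filter_append, ih]
    by_cases hac : a = c
    · subst hac
      rw [if_neg (by simp [hind]),
        WR5.cnt_cons_self, List.replicate_succ, List.flatten_cons]
    · rw [block_part_filter_of_ne hq (hx ▸ hac) (hy ▸ hac) _, WR5.cnt_cons_ne hac]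
      rfl

lemma expand_filter_ind (hq : ∀ z, q z = true ↔ (z = x' ∨ z = y'))
    {c : Fin n ⊕ Fin m} (hx : cls x' = c) (hy : cls y' = c) (hind : isInd c = true)
    {s : List (Fin n ⊕ Fin m)} (hs : c ∈ s) :
    (expand (K := K) s).filter q =
      (List.replicate (WR5.cnt c s - 1) ((blk c).filter q)).flatten ++
        ((blk c).filter q).reverse := by
  induction s with
  | nil => cases hs
  | cons a t ih =>
    by_cases hac : a = c
    · subst hac
      by_cases hmem : WR5.memb a t = true
      · have hmem' : a ∈ t := WR5.memb_iff.1 hmem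
        rw [expand_cons, if_neg (by simp [hmem]), List.filter_append, ih hmem',
          WR5.cnt_cons_self]
        obtain ⟨s0, hs0⟩ : ∃ s0, WR5.cnt a t = s0 + 1 :=
          ⟨WR5.cnt a t - 1, (Nat.succ_pred_eq_of_pos (WR5.cnt_pos hmem')).symm⟩
        rw [hs0]
        simp only [Nat.add_sub_cancel, List.replicate_succ, List.flatten_cons,
          List.append_assoc]
      · have hmf : WR5.memb a t = false := by
          rw [← Bool.not_eq_true]; exact hmem
        have hnm : a ∉ t := fun h => hmem (WR5.memb_iff.2 h)
        rw [expand_cons, if_pos (by simp [hind, hmf]), List.filter_append, List.filter_reverse,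
          expand_filter_zero hq hx hy hnm, WR5.cnt_cons_self, WR5.cnt_eq_zero hnm]
        simp
    · rw [expand_cons, List.filter_append,
        block_part_filter_of_ne hq (hx ▸ hac) (hy ▸ hac) _,
        ih ((List.mem_cons.1 hs).resolve_left (fun h => hac h.symm)),
        WR5.cnt_cons_ne hac]
      rfl

end pairs
end main

section adj
open Sum
variable {m n K : ℕ}

lemma split_adj_inl_inl {m' n' : ℕ} (M : Fin m' → Fin n' → Bool) (a b : Fin n') :
    (splitGraph M).Adj (inl a) (inl b) ↔ a ≠ b := by
  simp [splitGraph, SimpleGraph.fromRel_adj]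

lemma split_adj_inl_inr {m' n' : ℕ} (M : Fin m' → Fin n' → Bool) (a : Fin n') (b : Fin m') :
    (splitGraph M).Adj (inl a) (inr b) ↔ M b a = true := by
  simp [splitGraph, SimpleGraph.fromRel_adj]

lemma split_adj_inr_inl {m' n' : ℕ} (M : Fin m' → Fin n' → Bool) (a : Fin n') (b : Fin m') :
    (splitGraph M).Adj (inr b) (inl a) ↔ M b a = true := by
  rw [SimpleGraph.adj_comm]; exact split_adj_inl_inr M a b

lemma split_adj_inr_inr {m' n' : ℕ} (M : Fin m' → Fin n' → Bool) (a b : Fin m') :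
    (splitGraph M).Adj (inr a) (inr b) ↔ False := by
  simp [splitGraph, SimpleGraph.fromRel_adj]

lemma pos_of_fin_m (i : Fin (m ^ (K + 1))) : 0 < m :=
  Nat.pos_of_ne_zero fun h => by have := i.isLt; simp [h] at this

lemma pos_of_fin_n (j : Fin (n ^ (K + 1))) : 0 < n :=
  Nat.pos_of_ne_zero fun h => by have := j.isLt; simp [h] at this

lemma morph_tiling (A : Fin m → Fin n → Bool) (hm : 0 < m) (hn : 0 < n)
    (i : Fin (m ^ (K + 1))) (j : Fin (n ^ (K + 1))) :
    morphIter A A (K + 1) i j =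
      A ⟨i.val % m, Nat.mod_lt _ hm⟩ ⟨j.val % n, Nat.mod_lt _ hn⟩ := by
  rw [morphIter]
  split <;> rfl

lemma gk_adj_cls (A : Fin m → Fin n → Bool)
    {x' y' : Fin (n ^ (K + 1)) ⊕ Fin (m ^ (K + 1))}
    (hxy : x' ≠ y') (hcls : cls x' ≠ cls y') :
    (Gk A A (K + 1)).Adj x' y' ↔ (splitGraph A).Adj (cls x') (cls y') := by
  cases x' with
  | inl j1 =>
    cases y' with
    | inl j2 =>
      refine iff_of_true ?_ ?_
      · exact (split_adj_inl_inl (morphIter A A (K + 1)) j1 j2).2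
          (fun h => hxy (by rw [h]))
      · show (splitGraph A).Adj (inl _) (inl _)
        exact (split_adj_inl_inl A _ _).2 (fun h => hcls (by simp [cls, h]))
    | inr i2 =>
      show (splitGraph (morphIter A A (K + 1))).Adj (inl j1) (inr i2) ↔
        (splitGraph A).Adj (inl _) (inr _)
      rw [split_adj_inl_inr, split_adj_inl_inr,
        morph_tiling A (pos_of_fin_m i2) (pos_of_fin_n j1) i2 j1]
  | inr i1 =>
    cases y' with
    | inl j2 =>
      show (splitGraph (morphIter A A (K + 1))).Adj (inr i1) (inl j2) ↔
        (splitGraph A).Adj (inr _) (inl _)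
      rw [split_adj_inr_inl, split_adj_inr_inl,
        morph_tiling A (pos_of_fin_m i1) (pos_of_fin_n j2) i1 j2]
    | inr i2 =>
      show (splitGraph (morphIter A A (K + 1))).Adj (inr i1) (inr i2) ↔
        (splitGraph A).Adj (inr _) (inr _)
      rw [split_adj_inr_inr, split_adj_inr_inr]

end adj

section masters
open Sum
variable {m n K : ℕ}

lemma master_ne (A : Fin m → Fin n → Bool)
    {x' y' : Fin (n ^ (K + 1)) ⊕ Fin (m ^ (K + 1))}
    (hxy : x' ≠ y') (hcls : cls x' ≠ cls y')
    {q : Fin (n ^ (K + 1)) ⊕ Fin (m ^ (K + 1)) → Bool}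
    (hq : ∀ z, q z = true ↔ (z = x' ∨ z = y'))
    {p : Fin n ⊕ Fin m → Bool}
    (hp : ∀ z, p z = true ↔ (z = cls x' ∨ z = cls y'))
    {s : List (Fin n ⊕ Fin m)}
    (hAdj : (splitGraph A).Adj (cls x') (cls y') ↔ ((s.filter p).Chain' (· ≠ ·))) :
    (Gk A A (K + 1)).Adj x' y' ↔ (((expand (K := K) s).filter q).Chain' (· ≠ ·)) := by
  rw [expand_filter_ne hq hp hcls s,
    WR5.chain'_ne_map_iff (f := fun z => if z = cls x' then x' else y')
      (x := cls x') (y := cls y')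
      (by simp only [if_pos rfl, if_neg (Ne.symm hcls)]; exact hxy)
      (fun z hz => (hp z).1 (List.mem_filter.1 hz).2),
    ← hAdj]
  exact gk_adj_cls A hxy hcls

lemma master_clique (A : Fin m → Fin n → Bool)
    (j1 j2 : Fin (n ^ (K + 1))) (hne : j1 ≠ j2)
    {q : Fin (n ^ (K + 1)) ⊕ Fin (m ^ (K + 1)) → Bool}
    (hq : ∀ z, q z = true ↔ (z = Sum.inl j1 ∨ z = Sum.inl j2))
    {s : List (Fin n ⊕ Fin m)}
    (hcls : cls (m := m) (Sum.inl j1) = cls (Sum.inl j2)) :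
    (Gk A A (K + 1)).Adj (inl j1) (inl j2) ↔
      (((expand (K := K) s).filter q).Chain' (· ≠ ·)) := by
  have hxy : (Sum.inl j1 : Fin (n ^ (K + 1)) ⊕ Fin (m ^ (K + 1))) ≠ Sum.inl j2 :=
    fun h => hne (by injection h)
  refine iff_of_true ((split_adj_inl_inl (morphIter A A (K + 1)) j1 j2).2 hne) ?_
  rw [expand_filter_clique hq rfl hcls.symm rfl s]
  rcases blk_filter_pair hq hxy rfl hcls.symm with hL | hL <;> rw [hL]
  · exact (WR5.chain'_flatten_rep hxy _).1
  · exact (WR5.chain'_flatten_rep hxy.symm _).1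

lemma master_ind (A : Fin m → Fin n → Bool)
    (i1 i2 : Fin (m ^ (K + 1))) (hne : i1 ≠ i2)
    {q : Fin (n ^ (K + 1)) ⊕ Fin (m ^ (K + 1)) → Bool}
    (hq : ∀ z, q z = true ↔ (z = Sum.inr i1 ∨ z = Sum.inr i2))
    {s : List (Fin n ⊕ Fin m)}
    (hmem : cls (n := n) (Sum.inr i1) ∈ s)
    (hcnt : 2 ≤ WR5.cnt (cls (n := n) (Sum.inr i1)) s)
    (hcls : cls (n := n) (Sum.inr i1) = cls (Sum.inr i2)) :
    (Gk A A (K + 1)).Adj (inr i1) (inr i2) ↔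
      (((expand (K := K) s).filter q).Chain' (· ≠ ·)) := by
  have hxy : (Sum.inr i1 : Fin (n ^ (K + 1)) ⊕ Fin (m ^ (K + 1))) ≠ Sum.inr i2 :=
    fun h => hne (by injection h)
  refine iff_of_false (fun h => (split_adj_inr_inr (morphIter A A (K + 1)) i1 i2).1 h) ?_
  rw [expand_filter_ind hq rfl hcls.symm rfl hmem]
  obtain ⟨s0, hs0⟩ : ∃ s0, WR5.cnt (cls (n := n) (Sum.inr i1)) s - 1 = s0 + 1 :=
    ⟨WR5.cnt (cls (n := n) (Sum.inr i1)) s - 2, by omega⟩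
  rw [hs0]
  rcases blk_filter_pair hq hxy rfl hcls.symm with hL | hL <;> rw [hL]
  · have hrev : ([Sum.inr i1, Sum.inr i2] :
        List (Fin (n ^ (K + 1)) ⊕ Fin (m ^ (K + 1)))).reverse = [Sum.inr i2, Sum.inr i1] := rfl
    rw [hrev]
    exact WR5.not_chain_pattern hxy s0
  · have hrev : ([Sum.inr i2, Sum.inr i1] :
        List (Fin (n ^ (K + 1)) ⊕ Fin (m ^ (K + 1)))).reverse = [Sum.inr i1, Sum.inr i2] := rfl
    rw [hrev]
    exact WR5.not_chain_pattern hxy.symm s0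

/-- partial inverse of `iota` -/
def toV : Fin (n ^ (K + 1)) ⊕ Fin (m ^ (K + 1)) → Option (Fin n ⊕ Fin m)
  | Sum.inl j => if h : j.val < n then some (Sum.inl ⟨j.val, h⟩) else none
  | Sum.inr i => if h : i.val < m then some (Sum.inr ⟨i.val, h⟩) else none

lemma toV_iota (z : Fin n ⊕ Fin m) : toV (K := K) (iota z) = some z := by
  cases z with
  | inl a => simp [toV, iota, a.isLt]
  | inr b => simp [toV, iota, b.isLt]

lemma toV_eq_some {v' : Fin (n ^ (K + 1)) ⊕ Fin (m ^ (K + 1))} {z : Fin n ⊕ Fin m}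
    (h : toV v' = some z) : v' = iota z := by
  cases v' with
  | inl j =>
    by_cases hlt : j.val < n
    · rw [toV, dif_pos hlt] at h
      cases z with
      | inl a =>
        simp only [Option.some.injEq, Sum.inl.injEq] at h
        simp [iota, ← h, Fin.ext_iff]
      | inr b => simp at h
    · rw [toV, dif_neg hlt] at h; cases h
  | inr i =>
    by_cases hlt : i.val < m
    · rw [toV, dif_pos hlt] at h
      cases z with
      | inr b =>
        simp only [Option.some.injEq, Sum.inr.injEq] at h
        simp [iota, ← h, Fin.ext_iff]
      | inl a => simp at h
    · rw [toV, dif_neg hlt] at h; cases h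

lemma filterMap_filter_pair {x y : Fin n ⊕ Fin m} (hxy : x ≠ y)
    {p : Fin n ⊕ Fin m → Bool} (hp : ∀ z, p z = true ↔ (z = x ∨ z = y))
    {q : Fin (n ^ (K + 1)) ⊕ Fin (m ^ (K + 1)) → Bool}
    (hq : ∀ z, q z = true ↔ (z = iota (K := K) x ∨ z = iota y))
    (s : List (Fin (n ^ (K + 1)) ⊕ Fin (m ^ (K + 1)))) :
    (s.filterMap toV).filter p =
      (s.filter q).map (fun v' => if v' = iota x then x else y) := by
  induction s with
  | nil => rfl
  | cons a t ih =>
    by_cases hax : a = iota x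
    · subst hax
      rw [List.filterMap_cons_some (toV_iota x), List.filter_cons, List.filter_cons,
        if_pos ((hq _).2 (Or.inl rfl)), if_pos ((hp x).2 (Or.inl rfl)), List.map_cons, ih]
      simp
    · by_cases hay : a = iota y
      · subst hay
        rw [List.filterMap_cons_some (toV_iota y), List.filter_cons, List.filter_cons,
          if_pos ((hq _).2 (Or.inr rfl)), if_pos ((hp y).2 (Or.inr rfl)), List.map_cons, ih]
        have : iota (K := K) y ≠ iota x := fun h => hxy (iota_injective h).symm
        simp [this]
      · have hqf : q a = false := by
          rw [← Bool.not_eq_true]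
          intro h
          rcases (hq a).1 h with rfl | rfl
          · exact hax rfl
          · exact hay rfl
        rw [List.filter_cons, hqf]
        simp only [Bool.false_eq_true, if_false]
        cases hta : toV a with
        | none => rw [List.filterMap_cons_none hta]; exact ih
        | some z =>
          have haz := toV_eq_some hta
          subst haz
          have hzx : z ≠ x := fun h => hax (by rw [h])
          have hzy : z ≠ y := fun h => hay (by rw [h])
          have hpf : p z = false := by
            rw [← Bool.not_eq_true]
            intro h
            rcases (hp z).1 h with rfl | rfl
            · exact hzx rfl
            · exact hzy rfl
          rw [List.filterMap_cons_some hta, List.filter_cons, hpf]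
          simp only [Bool.false_eq_true, if_false]
          exact ih

lemma master_back (A : Fin m → Fin n → Bool) {x y : Fin n ⊕ Fin m} (hxy : x ≠ y)
    {p : Fin n ⊕ Fin m → Bool} (hp : ∀ z, p z = true ↔ (z = x ∨ z = y))
    {q : Fin (n ^ (K + 1)) ⊕ Fin (m ^ (K + 1)) → Bool}
    (hq : ∀ z, q z = true ↔ (z = iota (K := K) x ∨ z = iota y))
    {W : List (Fin (n ^ (K + 1)) ⊕ Fin (m ^ (K + 1)))}
    (hAdj : (Gk A A (K + 1)).Adj (iota x) (iota y) ↔ ((W.filter q).Chain' (· ≠ ·))) :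
    (splitGraph A).Adj x y ↔ (((W.filterMap toV).filter p).Chain' (· ≠ ·)) := by
  have hii : iota (K := K) x ≠ iota y := fun h => hxy (iota_injective h)
  rw [filterMap_filter_pair hxy hp hq W,
    WR5.chain'_ne_map_iff (f := fun v' => if v' = iota x then x else y)
      (x := iota (K := K) x) (y := iota y)
      (by simp only [if_pos rfl, if_neg (Ne.symm hii)]; exact hxy)
      (fun z hz => (hq z).1 (List.mem_filter.1 hz).2),
    ← hAdj, gk_adj_cls A hii (by rw [cls_iota, cls_iota]; exact hxy), cls_iota, cls_iota]

end masters

end WR5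

theorem stmt5 {m n : ℕ} (A : Fin m → Fin n → Bool) (k : ℕ) (hk : 1 ≤ k) :
    WordRepresentable (Gk A A k) ↔ WordRepresentable (splitGraph A) := by
  obtain ⟨K, rfl⟩ : ∃ K, k = K + 1 := ⟨k - 1, (Nat.succ_pred_eq_of_pos hk).symm⟩
  constructor
  · rintro ⟨W, hWmem, hWalt⟩
    refine ⟨W.filterMap WR5.toV,
      fun x => List.mem_filterMap.2 ⟨WR5.iota x, hWmem _, WR5.toV_iota x⟩,
      fun x y hxy => ?_⟩
    exact WR5.master_back A hxy (fun z => by simp) (fun z => by simp)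
      (hWalt (WR5.iota x) (WR5.iota y) (fun h => hxy (WR5.iota_injective h)))
  · rintro ⟨w, hw⟩
    have hw2 := WR5.doubling hw
    refine ⟨WR5.expand (K := K) (w ++ w.dedup),
      fun v' => WR5.mem_expand (hw2.1 (WR5.cls v')) rfl,
      fun x' y' hxy => ?_⟩
    have hcnt : ∀ c, 2 ≤ WR5.cnt c (w ++ w.dedup) := fun c => by
      rw [WR5.cnt_append]
      have h1 := WR5.cnt_pos (hw.1 c)
      have h2 := WR5.cnt_pos (List.mem_dedup.2 (hw.1 c))
      omega
    by_cases hcls : WR5.cls x' = WR5.cls y'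
    · cases x' with
      | inl j1 =>
        cases y' with
        | inl j2 =>
          exact WR5.master_clique A j1 j2 (fun h => hxy (by rw [h]))
            (fun z => by simp) hcls
        | inr i2 => exact absurd hcls (by simp [WR5.cls])
      | inr i1 =>
        cases y' with
        | inl j2 => exact absurd hcls (by simp [WR5.cls])
        | inr i2 =>
          exact WR5.master_ind A i1 i2 (fun h => hxy (by rw [h]))
            (fun z => by simp) (hw2.1 _) (hcnt _) hcls
    · exact WR5.master_ne A hxy hcls (fun z => by simp) (fun z => by simp)
        (hw2.2 (WR5.cls x') (WR5.cls y') hcls)
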